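/- Let G = (V,E) be a connected undirected simple graph with maximum vertex degree Δ. Suppose f : ℝ → ℝ satisfies |f(x)| ≤ c|x| for all x ∈ ℝ with 0 ≤ c < 1/Δ. Then for every positive definite matrix A with zeros according to G (i.e., a_{ij} = 0 whenever i ≠ j and (i,j) ∉ E), the matrix f*[A] obtained by applying f to off-diagonal entries is positive definite and also has zeros according to G. -/

import Mathlib

/-- `f*[A]`: apply `f` to off-diagonal entries, leave diagonal unchanged. -/
def offDiagApply {n : ℕ} (f : ℝ → ℝ) (A : Matrix (Fin n) (Fin n) ℝ) :
    Matrix (Fin n) (Fin n) ℝ :=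
  Matrix.of fun i j => if i = j then A i i else f (A i j)

lemma diagPos (n : ℕ) (A : Matrix (Fin n) (Fin n) ℝ) (hA : A.PosDef) (i : Fin n) :
    0 < A i i := by
  have h := hA.dotProduct_mulVec_pos (x := Pi.single i 1)
    (fun h => (one_ne_zero : (1:ℝ) ≠ 0) (by simpa using congrFun h i))
  simpa [dotProduct, Matrix.mulVec_single, Pi.single_apply, ite_mul,
    Finset.sum_ite_eq] using h

lemma sqBound (n : ℕ) (A : Matrix (Fin n) (Fin n) ℝ) (hA : A.PosDef) (hAs : A.IsSymm)
    (i j : Fin n) (hij : i ≠ j) : (A i j)^2 ≤ A i i * A j j := by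
  have hjj : 0 < A j j := diagPos n A hA j
  have hsym : A j i = A i j := by
    have := hAs.apply i j
    simpa using this
  set y : Fin n → ℝ := Pi.single i (A j j) + Pi.single j (-(A i j)) with hy
  have hyne : y ≠ 0 := by
    intro h
    have h2 := congrFun h i
    simp [hy, Pi.single_eq_same, Pi.single_eq_of_ne hij] at h2
    exact hjj.ne' h2
  have h := hA.dotProduct_mulVec_pos hyne
  rw [star_trivial] at h
  have hQ : dotProduct y (A.mulVec y)
      = A j j * (A i i * A j j - (A i j)^2) := by
    simp only [hy, Matrix.mulVec_add, Matrix.mulVec_single, dotProduct_add,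
      add_dotProduct, single_dotProduct, Pi.add_apply, Pi.smul_apply, op_smul_eq_mul,
      Matrix.col_apply]
    rw [hsym]
    ring
  rw [hQ] at h
  nlinarith

lemma termBound (a b t u v c ft : ℝ) (hc : 0 ≤ c) (ha : 0 ≤ a) (hb : 0 ≤ b)
    (hab : t^2 ≤ a*b) (hft : |ft| ≤ c * |t|) :
    -(c/2*(a*u^2+b*v^2)) ≤ u * (ft * v) := by
  set p := Real.sqrt a with hp'
  set q := Real.sqrt b with hq'
  have hp : p^2 = a := Real.sq_sqrt ha
  have hq : q^2 = b := Real.sq_sqrt hb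
  have hpn : 0 ≤ p := Real.sqrt_nonneg a
  have hqn : 0 ≤ q := Real.sqrt_nonneg b
  have h1 : |t| ≤ p * q := by
    rw [hp', hq', ← Real.sqrt_mul ha, ← Real.sqrt_sq_eq_abs]
    exact Real.sqrt_le_sqrt hab
  have h3 : |ft| ≤ c * (p * q) := hft.trans (mul_le_mul_of_nonneg_left h1 hc)
  have h2 : |ft| * (|u| * |v|) ≤ c/2*(a*u^2+b*v^2) := by
    have hgoal : |ft| * (|u| * |v|) ≤ c/2*(p^2*|u|^2+q^2*|v|^2) := by
      nlinarith [mul_le_mul_of_nonneg_right h3 (mul_nonneg (abs_nonneg u) (abs_nonneg v)),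
        mul_nonneg hc (sq_nonneg (p * |u| - q * |v|))]
    rwa [hp, hq, sq_abs, sq_abs] at hgoal
  have h4 : -(|ft| * (|u| * |v|)) ≤ u * (ft * v) := by
    have he : |u * (ft * v)| = |ft| * (|u| * |v|) := by
      rw [abs_mul, abs_mul]; ring
    calc -(|ft| * (|u| * |v|)) = -|u * (ft * v)| := by rw [he]
      _ ≤ u * (ft * v) := neg_abs_le _
  linarith

theorem stmt_2 (n : ℕ) (G : SimpleGraph (Fin n)) [DecidableRel G.Adj]
    (hG : G.Connected) (f : ℝ → ℝ) (c : ℝ)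
    (hc0 : 0 ≤ c) (hc1 : c < 1 / (G.maxDegree : ℝ))
    (hf : ∀ x : ℝ, |f x| ≤ c * |x|)
    (A : Matrix (Fin n) (Fin n) ℝ) (hAs : A.IsSymm) (hA : A.PosDef)
    (hAG : ∀ i j, i ≠ j → ¬ G.Adj i j → A i j = 0) :
    (offDiagApply f A).PosDef ∧
      ∀ i j, i ≠ j → ¬ G.Adj i j → offDiagApply f A i j = 0 := by
  classical
  set B := offDiagApply f A with hB
  have hf0 : f 0 = 0 := abs_nonpos_iff.mp (by simpa using hf 0)
  have hBG : ∀ i j, i ≠ j → ¬ G.Adj i j → B i j = 0 := by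
    intro i j hij hadj
    simp [hB, offDiagApply, hij, hAG i j hij hadj, hf0]
  have hΔR : 0 < (G.maxDegree : ℝ) := by
    rcases (Nat.cast_nonneg (α := ℝ) G.maxDegree).lt_or_eq with h | h
    · exact h
    · rw [← h] at hc1; simp at hc1; linarith
  have hcΔ : c * (G.maxDegree : ℝ) < 1 := by
    have := (lt_div_iff₀ hΔR).mp hc1
    linarith
  have hdiag : ∀ i, 0 < A i i := diagPos n A hA
  have hsymB : ∀ i j, B j i = B i j := by
    intro i j
    by_cases h : i = j
    · subst h; rfl
    · have hsA : A j i = A i j := by simpa using hAs.apply i j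
      simp [hB, offDiagApply, h, Ne.symm h, hsA]
  refine ⟨Matrix.PosDef.of_dotProduct_mulVec_pos ?_ ?_, hBG⟩
  · ext i j
    simp only [Matrix.conjTranspose_apply, star_trivial]
    exact hsymB i j
  · intro x hx
    rw [star_trivial]
    set D : Fin n → ℝ := fun i => A i i * x i ^ 2 with hD
    have hDnn : ∀ i, 0 ≤ D i := fun i => mul_nonneg (hdiag i).le (sq_nonneg _)
    have hS : 0 < ∑ i, D i := by
      obtain ⟨i0, hi0⟩ := Function.ne_iff.mp hx
      have hx2 : 0 < x i0 ^ 2 := (sq_nonneg (x i0)).lt_of_ne (Ne.symm (pow_ne_zero 2 hi0))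
      exact Finset.sum_pos' (fun i _ => hDnn i)
        ⟨i0, Finset.mem_univ _, mul_pos (hdiag i0) hx2⟩
    have hterm : ∀ i j, (if i = j then D i else 0) +
        (if G.Adj i j then -(c/2*(D i + D j)) else 0) ≤ x i * (B i j * x j) := by
      intro i j
      by_cases h : i = j
      · subst h
        have hBii : B i i = A i i := by simp [hB, offDiagApply]
        simp [hBii, hD, G.loopless.irrefl i]
        have : x i * (A i i * x i) = A i i * x i ^ 2 := by ring
        rw [this]
      · by_cases hadj : G.Adj i j
        · have hBij : B i j = f (A i j) := by simp [hB, offDiagApply, h]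
          simp only [if_neg h, if_pos hadj, zero_add, hBij, hD]
          exact termBound (A i i) (A j j) (A i j) (x i) (x j) c (f (A i j)) hc0
            (hdiag i).le (hdiag j).le (sqBound n A hA hAs i j h) (hf (A i j))
        · have hBij : B i j = 0 := hBG i j h hadj
          simp [if_neg h, if_neg hadj, hBij]
    have hQ : dotProduct x (B.mulVec x) = ∑ i, ∑ j, x i * (B i j * x j) := by
      simp [dotProduct, Matrix.mulVec, Finset.mul_sum]
    rw [hQ]
    have hLB : ∑ i, ∑ j, ((if i = j then D i else 0) +
        (if G.Adj i j then -(c/2*(D i + D j)) else 0)) ≤ ∑ i, ∑ j, x i * (B i j * x j) :=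
      Finset.sum_le_sum fun i _ => Finset.sum_le_sum fun j _ => hterm i j
    refine lt_of_lt_of_le ?_ hLB
    have hdegsum : ∀ (g : Fin n → ℝ),
        ∑ i, ∑ j, (if G.Adj i j then g i else 0) = ∑ i, (G.degree i : ℝ) * g i := by
      intro g
      refine Finset.sum_congr rfl fun i _ => ?_
      rw [Finset.sum_ite, Finset.sum_const, Finset.sum_const_zero, add_zero]
      rw [SimpleGraph.degree, SimpleGraph.neighborFinset_eq_filter, nsmul_eq_mul]
    have hsum1 : ∑ i, ∑ j, (if i = j then D i else 0) = ∑ i, D i := by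
      refine Finset.sum_congr rfl fun i _ => ?_
      simp [Finset.sum_ite_eq]
    have hsum2 : ∑ i, ∑ j, (if G.Adj i j then -(c/2*(D i + D j)) else 0)
        = - (c * ∑ i, (G.degree i : ℝ) * D i) := by
      have hsplit : ∀ i j, (if G.Adj i j then -(c/2*(D i + D j)) else 0)
          = (if G.Adj i j then -(c/2)*D i else 0) + (if G.Adj i j then -(c/2)*D j else 0) := by
        intro i j; split
        · ring
        · simp
      calc ∑ i, ∑ j, (if G.Adj i j then -(c/2*(D i + D j)) else 0)
          = ∑ i, ∑ j, ((if G.Adj i j then -(c/2)*D i else 0)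
              + (if G.Adj i j then -(c/2)*D j else 0)) := by
            exact Finset.sum_congr rfl fun i _ => Finset.sum_congr rfl fun j _ => hsplit i j
        _ = (∑ i, ∑ j, (if G.Adj i j then -(c/2)*D i else 0))
              + (∑ i, ∑ j, (if G.Adj i j then -(c/2)*D j else 0)) := by
            rw [← Finset.sum_add_distrib]
            exact Finset.sum_congr rfl fun i _ => Finset.sum_add_distrib
        _ = (∑ i, (G.degree i : ℝ) * (-(c/2)*D i))
              + (∑ j, (G.degree j : ℝ) * (-(c/2)*D j)) := by
            rw [hdegsum]
            congr 1
            rw [Finset.sum_comm]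
            calc ∑ j, ∑ i, (if G.Adj i j then -(c/2)*D j else 0)
                = ∑ j, ∑ i, (if G.Adj j i then -(c/2)*D j else 0) :=
                  Finset.sum_congr rfl fun j _ => Finset.sum_congr rfl fun i _ =>
                    if_congr (G.adj_comm i j) rfl rfl
              _ = ∑ j, (G.degree j : ℝ) * (-(c/2)*D j) := hdegsum _
        _ = - (c * ∑ i, (G.degree i : ℝ) * D i) := by
            rw [← Finset.sum_add_distrib, Finset.mul_sum, ← Finset.sum_neg_distrib]
            exact Finset.sum_congr rfl fun i _ => by ring
    have htotal : ∑ i, ∑ j, ((if i = j then D i else 0) +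
        (if G.Adj i j then -(c/2*(D i + D j)) else 0))
        = (∑ i, D i) - c * ∑ i, (G.degree i : ℝ) * D i := by
      calc ∑ i, ∑ j, ((if i = j then D i else 0) +
            (if G.Adj i j then -(c/2*(D i + D j)) else 0))
          = (∑ i, ∑ j, (if i = j then D i else 0))
              + (∑ i, ∑ j, (if G.Adj i j then -(c/2*(D i + D j)) else 0)) := by
            rw [← Finset.sum_add_distrib]
            exact Finset.sum_congr rfl fun i _ => Finset.sum_add_distrib
        _ = (∑ i, D i) - c * ∑ i, (G.degree i : ℝ) * D i := by
            rw [hsum1, hsum2]; ring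
    rw [htotal]
    have hT : ∑ i, (G.degree i : ℝ) * D i ≤ (G.maxDegree : ℝ) * ∑ i, D i := by
      rw [Finset.mul_sum]
      exact Finset.sum_le_sum fun i _ => mul_le_mul_of_nonneg_right
        (by exact_mod_cast G.degree_le_maxDegree i) (hDnn i)
    nlinarith [mul_le_mul_of_nonneg_left hT hc0, mul_lt_mul_of_pos_right hcΔ hS]
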